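/- Let K be a compact Hausdorff space, (F_n)_{n∈ω} a sequence of pairwise disjoint closed subsets of K, and F a closed subset of K such that: (a) F admits an extension operator in K; (b) every cluster point of the sequence (F_n) lies in F and F_n ∩ F = ∅ for all n; (c) for each n there is a weak*-null biorthogonal system (f_{n,α}, γ_{n,α})_{α∈𝔠} in C(F_n) with sup_{n,α} ‖f_{n,α}‖ < ∞ and sup_{n,α} ‖γ_{n,α}‖ < ∞. Then K satisfies property (∗). -/

import Mathlib

open Cardinal
open scoped Classical

/-- Property (∗) of a compact Hausdorff space `K`. -/
def PropertyStar (K : Type) [TopologicalSpace K] [CompactSpace K] [T2Space K] : Prop :=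
  ∃ (ι : Type) (_ : #ι = Cardinal.continuum)
    (F : ℕ → Set K) (f : ℕ → ι → C(K, ℝ)) (γ : ℕ → ι → (C(K, ℝ) →L[ℝ] ℝ)),
    (∀ n, IsClosed (F n)) ∧
    (∀ n, F n ∩ closure (⋃ m ∈ {m : ℕ | m ≠ n}, F m) = ∅) ∧
    (∀ n α m β, γ n α (f m β) = if (n, α) = (m, β) then (1 : ℝ) else 0) ∧
    (∃ C : ℝ, ∀ n α, ‖f n α‖ ≤ C ∧ ‖γ n α‖ ≤ C) ∧
    (∀ g : C(K, ℝ), ∀ ε : ℝ, 0 < ε → {p : ℕ × ι | ε ≤ |γ p.1 p.2 g|}.Finite) ∧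
    (∀ n α, tsupport ⇑(f n α) ⊆ F n)

/-- `x` is a cluster point of the sequence of sets `(S n)`: every neighborhood of `x`
meets `S n` for infinitely many `n`. -/
def IsClusterPointOfSets {K : Type} [TopologicalSpace K] (S : ℕ → Set K) (x : K) : Prop :=
  ∀ U ∈ nhds x, {n : ℕ | (S n ∩ U).Nonempty}.Infinite

section aux
variable {K : Type} [TopologicalSpace K]

lemma aux_closure_biUnion_subset (Fs : ℕ → Set K) (F : Set K)
    (hFsclosed : ∀ n, IsClosed (Fs n))
    (hcluster : ∀ x : K, IsClusterPointOfSets Fs x → x ∈ F) (S : Set ℕ) :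
    closure (⋃ n ∈ S, Fs n) ⊆ F ∪ ⋃ n ∈ S, Fs n := by
  intro x hx
  by_cases xF : x ∈ F
  · exact Or.inl xF
  by_cases hex : ∃ n ∈ S, x ∈ Fs n
  · obtain ⟨n, hn, hxn⟩ := hex
    exact Or.inr (Set.mem_biUnion hn hxn)
  exfalso
  have hnc : ¬ IsClusterPointOfSets Fs x := fun h => xF (hcluster x h)
  rw [IsClusterPointOfSets] at hnc
  push_neg at hnc
  obtain ⟨U, hU, hfin⟩ := hnc
  set M : Set ℕ := {n | n ∈ S ∧ (Fs n ∩ U).Nonempty} with hM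
  have hMfin : M.Finite := hfin.subset (fun n hn => hn.2)
  set V : Set K := interior U \ ⋃ n ∈ M, Fs n with hV
  have hVopen : IsOpen V := isOpen_interior.sdiff (hMfin.isClosed_biUnion (fun n _ => hFsclosed n))
  have hxV : x ∈ V := by
    constructor
    · exact mem_interior_iff_mem_nhds.2 hU
    · intro hmem
      obtain ⟨n, hn, hxn⟩ := Set.mem_iUnion₂.1 hmem
      exact hex ⟨n, hn.1, hxn⟩
  have := (mem_closure_iff.1 hx) V hVopen hxV
  obtain ⟨y, hyV, hy⟩ := this
  obtain ⟨n, hnS, hyn⟩ := Set.mem_iUnion₂.1 hy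
  have hnM : n ∈ M := ⟨hnS, ⟨y, hyn, interior_subset hyV.1⟩⟩
  exact hyV.2 (Set.mem_biUnion hnM hyn)

lemma aux_finite_meets [CompactSpace K] (Fs : ℕ → Set K) (F : Set K)
    (hcluster : ∀ x : K, IsClusterPointOfSets Fs x → x ∈ F) (A : Set K)
    (hA : IsCompact A) (hAF : ∀ x ∈ A, x ∉ F) :
    {n : ℕ | (Fs n ∩ A).Nonempty}.Finite := by
  have key : ∀ x ∈ A, ∃ U ∈ nhds x, {n : ℕ | (Fs n ∩ U).Nonempty}.Finite := by
    intro x hx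
    have hnc : ¬ IsClusterPointOfSets Fs x := fun h => hAF x hx (hcluster x h)
    rw [IsClusterPointOfSets] at hnc
    push_neg at hnc
    obtain ⟨U, hU, hfin⟩ := hnc
    exact ⟨U, hU, hfin⟩
  choose! U hU hUfin using key
  obtain ⟨t, hcov⟩ := hA.elim_nhds_subcover' (fun x _ => U x) (fun x hx => hU x hx)
  apply Set.Finite.subset (Set.Finite.biUnion t.finite_toSet
    (fun x _ => hUfin x x.2))
  intro n hn
  obtain ⟨y, hyn, hyA⟩ := hn
  obtain ⟨x, hxt, hyU⟩ := Set.mem_iUnion₂.1 (hcov hyA)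
  exact Set.mem_biUnion hxt ⟨y, hyn, hyU⟩
end aux

noncomputable def restrictCLM (K : Type) [TopologicalSpace K] [CompactSpace K]
    (s : Set K) [CompactSpace ↥s] : C(K, ℝ) →L[ℝ] C(↥s, ℝ) :=
  LinearMap.mkContinuous
    { toFun := fun g => g.restrict s
      map_add' := fun g h => by ext x; simp [ContinuousMap.restrict_apply]
      map_smul' := fun c g => by ext x; simp [ContinuousMap.restrict_apply] }
    1
    (fun g => by
      rw [one_mul]
      refine (ContinuousMap.norm_le _ (norm_nonneg g)).2 fun x => ?_
      exact ContinuousMap.norm_coe_le_norm g x)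

lemma restrictCLM_apply (K : Type) [TopologicalSpace K] [CompactSpace K]
    (s : Set K) [CompactSpace ↥s] (g : C(K, ℝ)) :
    restrictCLM K s g = g.restrict s := rfl

lemma restrictCLM_norm_le (K : Type) [TopologicalSpace K] [CompactSpace K]
    (s : Set K) [CompactSpace ↥s] : ‖restrictCLM K s‖ ≤ 1 :=
  LinearMap.mkContinuous_norm_le _ zero_le_one _

lemma aux_tietze_bdd {K : Type} [TopologicalSpace K] [CompactSpace K] [T2Space K]
    {s : Set K} [CompactSpace ↥s] (hs : IsClosed s) (f : C(↥s, ℝ)) :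
    ∃ g : C(K, ℝ), g.restrict s = f ∧ ∀ x : K, |g x| ≤ ‖f‖ := by
  obtain ⟨g, hg1, hg2⟩ := BoundedContinuousFunction.exists_norm_eq_restrict_eq_of_closed
    (BoundedContinuousFunction.mkOfCompact f) hs
  refine ⟨g.toContinuousMap, ?_, ?_⟩
  · ext x
    have := DFunLike.congr_fun hg2 x
    simpa using this
  · intro x
    calc |g x| ≤ ‖g‖ := g.norm_coe_le_norm x
    _ = ‖f‖ := by rw [hg1, BoundedContinuousFunction.norm_mkOfCompact]

lemma aux_psi {K : Type} [TopologicalSpace K] [CompactSpace K] [T2Space K]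
    (Fs : ℕ → Set K) (F : Set K)
    (hFsclosed : ∀ n, IsClosed (Fs n)) (hFclosed : IsClosed F)
    (hdisj : ∀ n m, n ≠ m → Fs n ∩ Fs m = ∅)
    (hcluster : ∀ x : K, IsClusterPointOfSets Fs x → x ∈ F)
    (hFF : ∀ n, Fs n ∩ F = ∅) :
    ∃ ψ : C(K, ℝ), (∀ n, ∀ x ∈ Fs n, ψ x = (2⁻¹ : ℝ) ^ n) ∧ (∀ x ∈ F, ψ x = 0) := by
  -- the closed set T
  set T : Set K := F ∪ ⋃ n, Fs n with hT
  have hclU : ∀ S : Set ℕ, IsClosed (F ∪ ⋃ n ∈ S, Fs n) := by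
    intro S
    apply isClosed_of_closure_subset
    rw [closure_union]
    rw [hFclosed.closure_eq]
    intro x hx
    rcases hx with h | h
    · exact Or.inl h
    · rcases aux_closure_biUnion_subset Fs F hFsclosed hcluster S h with h' | h'
      · exact Or.inl h'
      · exact Or.inr h'
  have hTclosed : IsClosed T := by
    have := hclU Set.univ
    simpa [hT] using this
  -- the function on K (continuous only on T)
  set ψval : K → ℝ := fun x => if h : ∃ n, x ∈ Fs n then (2⁻¹ : ℝ) ^ (Nat.find h) else 0
    with hψval
  have hval_n : ∀ n, ∀ x ∈ Fs n, ψval x = (2⁻¹ : ℝ) ^ n := by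
    intro n x hx
    have h : ∃ m, x ∈ Fs m := ⟨n, hx⟩
    rw [hψval]
    simp only [dif_pos h]
    congr 1
    by_contra hne
    have hxfind : x ∈ Fs (Nat.find h) := Nat.find_spec h
    have := hdisj (Nat.find h) n hne
    exact absurd (Set.mem_inter hxfind hx) (by rw [this]; exact Set.notMem_empty x)
  have hval_F : ∀ x ∈ F, ψval x = 0 := by
    intro x hx
    rw [hψval]
    have : ¬ ∃ n, x ∈ Fs n := by
      rintro ⟨n, hn⟩
      exact absurd (Set.mem_inter hn hx) (by rw [hFF n]; exact Set.notMem_empty x)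
    simp only [dif_neg this]
  -- continuity of the restriction to T
  have hcont : Continuous (T.restrict ψval) := by
    rw [continuous_iff_continuousAt]
    rintro ⟨x, hxT⟩
    rcases hxT with hxF | hxU
    · -- x ∈ F : value 0
      have hgx : T.restrict ψval ⟨x, Or.inl hxF⟩ = 0 := hval_F x hxF
      rw [ContinuousAt, hgx]
      rw [Metric.tendsto_nhds]
      intro ε hε
      obtain ⟨N, hN⟩ := exists_pow_lt_of_lt_one hε (by norm_num : (2⁻¹ : ℝ) < 1)
      set W : Set ↥T := Subtype.val ⁻¹' (⋃ m ∈ Finset.range (N + 1), Fs m)ᶜ with hW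
      have hWopen : IsOpen W := by
        apply IsOpen.preimage continuous_subtype_val
        exact (Set.Finite.isClosed_biUnion (Finset.range (N+1)).finite_toSet
          (fun m _ => hFsclosed m)).isOpen_compl
      have hxW : (⟨x, Or.inl hxF⟩ : ↥T) ∈ W := by
        simp only [hW, Set.mem_preimage, Set.mem_compl_iff]
        intro hmem
        obtain ⟨m, _, hxm⟩ := Set.mem_iUnion₂.1 hmem
        exact absurd (Set.mem_inter hxm hxF) (by rw [hFF m]; exact Set.notMem_empty x)
      refine Filter.eventually_of_mem (hWopen.mem_nhds hxW) ?_
      rintro ⟨y, hyT⟩ hyW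
      simp only [Real.dist_eq, sub_zero]
      rcases hyT with hyF | hyU
      · show |ψval y| < ε
        rw [hval_F y hyF]
        simpa using hε
      · obtain ⟨m, hym⟩ := Set.mem_iUnion.1 hyU
        have hmN : N ≤ m := by
          by_contra hlt
          push_neg at hlt
          apply hyW
          exact Set.mem_biUnion (Finset.mem_range.2 (by omega)) hym
        show |ψval y| < ε
        rw [hval_n m y hym]
        rw [abs_of_nonneg (by positivity)]
        calc (2⁻¹ : ℝ) ^ m ≤ (2⁻¹ : ℝ) ^ N :=
              pow_le_pow_of_le_one (by norm_num) (by norm_num) hmN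
          _ < ε := hN
    · -- x ∈ Fs n : locally constant
      obtain ⟨n, hxn⟩ := Set.mem_iUnion.1 hxU
      set V : Set ↥T := Subtype.val ⁻¹' (F ∪ ⋃ m ∈ {m : ℕ | m ≠ n}, Fs m)ᶜ with hV
      have hVopen : IsOpen V :=
        IsOpen.preimage continuous_subtype_val (hclU {m | m ≠ n}).isOpen_compl
      have hxV : (⟨x, Or.inr hxU⟩ : ↥T) ∈ V := by
        simp only [hV, Set.mem_preimage, Set.mem_compl_iff]
        rintro (hF' | hU')
        · exact absurd (Set.mem_inter hxn hF') (by rw [hFF n]; exact Set.notMem_empty x)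
        · obtain ⟨m, hmne, hxm⟩ := Set.mem_iUnion₂.1 hU'
          exact absurd (Set.mem_inter hxm hxn)
            (by rw [hdisj m n hmne]; exact Set.notMem_empty x)
      have hconst : ∀ z ∈ V, T.restrict ψval z = (2⁻¹ : ℝ) ^ n := by
        rintro ⟨z, hzT⟩ hzV
        simp only [hV, Set.mem_preimage, Set.mem_compl_iff] at hzV
        rcases hzT with hzF | hzU
        · exact absurd (Or.inl hzF) hzV
        · obtain ⟨m, hzm⟩ := Set.mem_iUnion.1 hzU
          have hmn : m = n := by
            by_contra hne
            exact hzV (Or.inr (Set.mem_biUnion hne hzm))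
          subst hmn
          exact hval_n m z hzm
      have heq : T.restrict ψval =ᶠ[nhds (⟨x, Or.inr hxU⟩ : ↥T)]
          fun _ => (2⁻¹ : ℝ) ^ n :=
        Filter.eventually_of_mem (hVopen.mem_nhds hxV) hconst
      exact heq.continuousAt
  -- Tietze extension
  obtain ⟨ψ, hres⟩ := ContinuousMap.exists_restrict_eq hTclosed
    (⟨T.restrict ψval, hcont⟩ : C(↥T, ℝ))
  have hψeq : ∀ x (hx : x ∈ T), ψ x = ψval x := by
    intro x hx
    have := DFunLike.congr_fun hres (⟨x, hx⟩ : ↥T)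
    exact this
  refine ⟨ψ, ?_, ?_⟩
  · intro n x hx
    rw [hψeq x (Or.inr (Set.mem_iUnion.2 ⟨n, hx⟩)), hval_n n x hx]
  · intro x hx
    rw [hψeq x (Or.inl hx), hval_F x hx]

/-- if `K` has pairwise disjoint closed sets `(F_n)` and a closed set `F`
such that (a) `F` admits an extension operator in `K`, (b) all cluster points of `(F_n)`
lie in `F` and `F_n ∩ F = ∅`, and (c) each `C(F_n)` has a weak*-null biorthogonal system
of cardinality `𝔠`, uniformly bounded in `n`, then `K` satisfies property (∗). -/

theorem statement7 (K : Type) [TopologicalSpace K] [CompactSpace K] [T2Space K]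
    (Fs : ℕ → Set K) (F : Set K)
    (hFsclosed : ∀ n, IsClosed (Fs n)) (hFclosed : IsClosed F)
    [∀ n, CompactSpace ↥(Fs n)] [CompactSpace ↥F]
    (hdisj : ∀ n m, n ≠ m → Fs n ∩ Fs m = ∅)
    -- (a) extension operator for F in K
    (E : C(↥F, ℝ) →L[ℝ] C(K, ℝ)) (hE : ∀ g : C(↥F, ℝ), (E g).restrict F = g)
    -- (b)
    (hcluster : ∀ x : K, IsClusterPointOfSets Fs x → x ∈ F)
    (hFF : ∀ n, Fs n ∩ F = ∅)
    -- (c)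
    (ι : Type) (hι : #ι = Cardinal.continuum)
    (f : ∀ n : ℕ, ι → C(↥(Fs n), ℝ)) (γ : ∀ n : ℕ, ι → (C(↥(Fs n), ℝ) →L[ℝ] ℝ))
    (hbiorth : ∀ n α β, γ n α (f n β) = if α = β then (1 : ℝ) else 0)
    (hwstarnull : ∀ n, ∀ g : C(↥(Fs n), ℝ), ∀ ε : ℝ, 0 < ε → {α : ι | ε ≤ |γ n α g|}.Finite)
    (hbdd : ∃ C : ℝ, ∀ n α, ‖f n α‖ ≤ C ∧ ‖γ n α‖ ≤ C) :
    PropertyStar K := by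
  classical
  obtain ⟨C, hC⟩ := hbdd
  have hιne : Nonempty ι :=
    Cardinal.mk_ne_zero_iff.1 (by rw [hι]; exact Cardinal.continuum_ne_zero)
  have hC0 : 0 ≤ C := le_trans (norm_nonneg _) (hC 0 (Classical.arbitrary ι)).1
  obtain ⟨ψ, hψn, hψF⟩ := aux_psi Fs F hFsclosed hFclosed hdisj hcluster hFF
  set a : ℕ → ℝ := fun n => (2⁻¹ : ℝ) ^ n with ha
  have ha0 : ∀ n, 0 < a n := fun n => by rw [ha]; positivity
  have hahalf : ∀ n m, n < m → a m ≤ a n / 2 := by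
    intro n m hnm
    rw [ha]
    have : (2⁻¹ : ℝ) ^ m ≤ (2⁻¹ : ℝ) ^ (n + 1) :=
      pow_le_pow_of_le_one (by norm_num) (by norm_num) (by omega)
    calc (2⁻¹ : ℝ) ^ m ≤ (2⁻¹ : ℝ) ^ (n + 1) := this
      _ = (2⁻¹ : ℝ) ^ n / 2 := by rw [pow_succ]; ring
  -- enlarged closed sets
  set F' : ℕ → Set K := fun n => {x | |ψ x - a n| ≤ a n / 10} with hF'
  have hF'closed : ∀ n, IsClosed (F' n) :=
    fun n => isClosed_le (continuous_abs.comp (ψ.continuous.sub continuous_const))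
      continuous_const
  have hFsF' : ∀ n, Fs n ⊆ F' n := by
    intro n x hx
    have := ha0 n
    simp only [hF', Set.mem_setOf_eq, hψn n x hx, sub_self, abs_zero]
    rw [show (2⁻¹:ℝ)^n - a n = 0 from sub_self _, abs_zero]
    linarith
  -- strong separation
  have hsep : ∀ n, F' n ∩ closure (⋃ m ∈ {m : ℕ | m ≠ n}, F' m) = ∅ := by
    intro n
    rw [Set.eq_empty_iff_forall_notMem]
    rintro x ⟨hx1, hx2⟩
    simp only [hF', Set.mem_setOf_eq] at hx1
    have hb := abs_le.1 hx1
    have han := ha0 n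
    set V : Set K := {y | 0.7 * a n < ψ y ∧ ψ y < 1.5 * a n} with hVdef
    have hVopen : IsOpen V :=
      (isOpen_lt continuous_const ψ.continuous).inter
        (isOpen_lt ψ.continuous continuous_const)
    have hxV : x ∈ V := by
      constructor
      · linarith [hb.1]
      · linarith [hb.2]
    obtain ⟨y, hyV, hyU⟩ := (mem_closure_iff.1 hx2) V hVopen hxV
    obtain ⟨m, hmn, hym⟩ := Set.mem_iUnion₂.1 hyU
    simp only [hF', Set.mem_setOf_eq] at hym
    have hbm := abs_le.1 hym
    have ham := ha0 m
    rcases lt_or_gt_of_ne hmn with hlt | hgt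
    · -- m < n : a n ≤ a m / 2, ψ y ≥ 0.9 a m ≥ 1.8 a n > 1.5 a n
      have := hahalf m n hlt
      have h2 : ψ y < 1.5 * a n := hyV.2
      linarith [hbm.1]
    · -- m > n : a m ≤ a n / 2, ψ y ≤ 1.1 a m ≤ 0.55 a n < 0.7 a n
      have := hahalf n m hgt
      have h1 : 0.7 * a n < ψ y := hyV.1
      linarith [hbm.2]
  -- the bump functions
  have hφcont : ∀ n, Continuous fun x : K => max 0 (1 - 40 / a n * |ψ x - a n|) :=
    fun n => continuous_const.max (continuous_const.sub
      (continuous_const.mul (continuous_abs.comp (ψ.continuous.sub continuous_const))))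
  set φ : ℕ → C(K, ℝ) := fun n => ⟨fun x => max 0 (1 - 40 / a n * |ψ x - a n|), hφcont n⟩
    with hφdef
  have hφapp : ∀ n x, φ n x = max 0 (1 - 40 / a n * |ψ x - a n|) := fun n x => rfl
  have hφ1 : ∀ n, ∀ x ∈ Fs n, φ n x = 1 := by
    intro n x hx
    rw [hφapp, hψn n x hx, sub_self, abs_zero, mul_zero, sub_zero]
    exact max_eq_right zero_le_one
  have hφ01 : ∀ n x, 0 ≤ φ n x ∧ φ n x ≤ 1 := by
    intro n x
    have han := ha0 n
    refine ⟨le_max_left _ _, ?_⟩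
    rw [hφapp]
    apply max_le zero_le_one
    have : 0 ≤ 40 / a n * |ψ x - a n| := by positivity
    linarith
  have hφF : ∀ n, ∀ x ∈ F, φ n x = 0 := by
    intro n x hx
    have han := ha0 n
    rw [hφapp, hψF x hx]
    apply max_eq_left
    rw [abs_of_nonpos (by linarith), neg_sub, sub_zero]
    have h40 : 40 / a n * a n = 40 := div_mul_cancel₀ 40 han.ne'
    linarith
  have hφm : ∀ n m, m ≠ n → ∀ x ∈ Fs m, φ n x = 0 := by
    intro n m hmn x hx
    have han := ha0 n
    have ham := ha0 m
    rw [hφapp, hψn m x hx]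
    rw [show (2⁻¹:ℝ) ^ m = a m from rfl]
    apply max_eq_left
    have hkey : a n / 2 ≤ |a m - a n| := by
      rcases lt_or_gt_of_ne hmn with hlt | hgt
      · have := hahalf m n hlt
        rw [abs_of_nonneg (by linarith)]
        linarith
      · have := hahalf n m hgt
        rw [abs_of_nonpos (by linarith)]
        linarith
    have h40 : (20 : ℝ) ≤ 40 / a n * |a m - a n| := by
      have := mul_le_mul_of_nonneg_left hkey (le_of_lt (by positivity : (0:ℝ) < 40 / a n))
      calc (20 : ℝ) = 40 / a n * (a n / 2) := by field_simp; ring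
        _ ≤ 40 / a n * |a m - a n| := this
    linarith
  have hφsupp : ∀ n, tsupport ⇑(φ n) ⊆ F' n := by
    intro n
    apply closure_minimal _ (hF'closed n)
    intro x hx
    have han := ha0 n
    simp only [Function.mem_support, hφapp] at hx
    have hpos : 0 < 1 - 40 / a n * |ψ x - a n| := by
      by_contra hle
      push_neg at hle
      exact hx (max_eq_left hle)
    have : 40 / a n * |ψ x - a n| < 1 := by linarith
    have habs : |ψ x - a n| < a n / 40 := by
      by_contra hge
      push_neg at hge
      have := mul_le_mul_of_nonneg_left hge (le_of_lt (by positivity : (0:ℝ) < 40 / a n))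
      rw [show 40 / a n * (a n / 40) = 1 by field_simp] at this
      linarith
    simp only [hF', Set.mem_setOf_eq]
    linarith
  -- extensions of the f n α
  have hext : ∀ n α, ∃ g : C(K, ℝ), g.restrict (Fs n) = f n α ∧ ∀ x, |g x| ≤ C := by
    intro n α
    obtain ⟨g, hg1, hg2⟩ := aux_tietze_bdd (hFsclosed n) (f n α)
    exact ⟨g, hg1, fun x => (hg2 x).trans (hC n α).1⟩
  choose ht ht1 ht2 using hext
  set fh : ℕ → ι → C(K, ℝ) := fun n α => φ n * ht n α with hfhdef
  have hfhapp : ∀ n α x, fh n α x = φ n x * ht n α x := fun n α x => rfl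
  have hfhFs : ∀ n α (x : K) (hx : x ∈ Fs n), fh n α x = f n α ⟨x, hx⟩ := by
    intro n α x hx
    rw [hfhapp, hφ1 n x hx, one_mul]
    have := DFunLike.congr_fun (ht1 n α) (⟨x, hx⟩ : ↥(Fs n))
    simpa [ContinuousMap.restrict_apply] using this
  have hfhF : ∀ n α, ∀ x ∈ F, fh n α x = 0 := by
    intro n α x hx
    rw [hfhapp, hφF n x hx, zero_mul]
  have hfhm : ∀ n α m, m ≠ n → ∀ x ∈ Fs m, fh n α x = 0 := by
    intro n α m hmn x hx
    rw [hfhapp, hφm n m hmn x hx, zero_mul]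
  have hfhnorm : ∀ n α, ‖fh n α‖ ≤ C := by
    intro n α
    refine (ContinuousMap.norm_le _ hC0).2 fun x => ?_
    rw [hfhapp]
    have h1 := hφ01 n x
    have h2 := ht2 n α x
    have : ‖φ n x * ht n α x‖ = |φ n x| * |ht n α x| := abs_mul _ _
    rw [Real.norm_eq_abs, abs_mul, abs_of_nonneg h1.1]
    calc φ n x * |ht n α x| ≤ 1 * C :=
          mul_le_mul h1.2 h2 (abs_nonneg _) zero_le_one
      _ = C := one_mul C
  have hfhsupp : ∀ n α, tsupport ⇑(fh n α) ⊆ F' n := by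
    intro n α
    apply closure_minimal _ (hF'closed n)
    intro x hx
    apply hφsupp n
    apply subset_closure
    simp only [Function.mem_support] at hx ⊢
    intro h0
    exact hx (by rw [hfhapp, h0, zero_mul])
  -- the functionals
  set D : C(K, ℝ) →L[ℝ] C(K, ℝ) :=
    ContinuousLinearMap.id ℝ C(K, ℝ) - E.comp (restrictCLM K F) with hDdef
  set γh : ℕ → ι → (C(K, ℝ) →L[ℝ] ℝ) :=
    fun n α => (γ n α).comp ((restrictCLM K (Fs n)).comp D) with hγhdef
  have hγhapp : ∀ n α (g : C(K, ℝ)),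
      γh n α g = γ n α ((g - E (g.restrict F)).restrict (Fs n)) := fun n α g => rfl
  -- fh restricted to F is 0
  have hfh_resF : ∀ n α, (fh n α).restrict F = 0 := by
    intro n α
    ext x
    simp only [ContinuousMap.restrict_apply, ContinuousMap.zero_apply]
    exact hfhF n α x x.2
  -- biorthogonality
  have hbi : ∀ n α m β, γh n α (fh m β) = if (n, α) = (m, β) then (1 : ℝ) else 0 := by
    intro n α m β
    rw [hγhapp, hfh_resF, map_zero, sub_zero]
    by_cases hnm : n = m
    · subst hnm
      have hres : (fh n β).restrict (Fs n) = f n β := by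
        ext x
        simp only [ContinuousMap.restrict_apply]
        rw [hfhFs n β x x.2]
      rw [hres, hbiorth n α β]
      by_cases hab : α = β
      · subst hab; simp
      · simp [hab, Prod.ext_iff]
    · have hres : (fh m β).restrict (Fs n) = 0 := by
        ext x
        simp only [ContinuousMap.restrict_apply, ContinuousMap.zero_apply]
        exact hfhm m β n hnm x x.2
      rw [hres, map_zero]
      simp [Prod.ext_iff, hnm]
  -- norms of the functionals
  have norm_restrict_le : ∀ (s : Set K) (_ : CompactSpace ↥s) (g : C(K, ℝ)),
      ‖g.restrict s‖ ≤ ‖g‖ := by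
    intro s hs g
    exact (ContinuousMap.norm_le _ (norm_nonneg g)).2 fun x => g.norm_coe_le_norm x
  have hγhnorm : ∀ n α, ‖γh n α‖ ≤ C * (1 + ‖E‖) := by
    intro n α
    apply ContinuousLinearMap.opNorm_le_bound _ (by positivity)
    intro g
    have hgF : ‖g - E (g.restrict F)‖ ≤ (1 + ‖E‖) * ‖g‖ := by
      calc ‖g - E (g.restrict F)‖ ≤ ‖g‖ + ‖E (g.restrict F)‖ := norm_sub_le _ _
        _ ≤ ‖g‖ + ‖E‖ * ‖g.restrict F‖ := by gcongr; exact E.le_opNorm _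
        _ ≤ ‖g‖ + ‖E‖ * ‖g‖ := by gcongr; exact norm_restrict_le F inferInstance g
        _ = (1 + ‖E‖) * ‖g‖ := by ring
    have h2 : ‖(g - E (g.restrict F)).restrict (Fs n)‖ ≤ (1 + ‖E‖) * ‖g‖ :=
      (norm_restrict_le (Fs n) inferInstance _).trans hgF
    calc ‖γh n α g‖ ≤ ‖γ n α‖ * ‖(g - E (g.restrict F)).restrict (Fs n)‖ := by
          rw [hγhapp]; exact (γ n α).le_opNorm _
      _ ≤ C * ((1 + ‖E‖) * ‖g‖) :=
          mul_le_mul (hC n α).2 h2 (norm_nonneg _) hC0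
      _ = C * (1 + ‖E‖) * ‖g‖ := by ring
  -- weak*-null
  have hwn : ∀ g : C(K, ℝ), ∀ ε : ℝ, 0 < ε → {p : ℕ × ι | ε ≤ |γh p.1 p.2 g|}.Finite := by
    intro g ε hε
    set h : C(K, ℝ) := g - E (g.restrict F) with hhdef
    have hγg : ∀ n α, γh n α g = γ n α (h.restrict (Fs n)) := by
      intro n α
      rw [hγhapp]
    have hhF : ∀ x ∈ F, h x = 0 := by
      intro x hx
      have := DFunLike.congr_fun (hE (g.restrict F)) (⟨x, hx⟩ : ↥F)
      simp only [ContinuousMap.restrict_apply] at this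
      simp [hhdef, this]
    set δ : ℝ := ε / (C + 1) with hδdef
    have hδ : 0 < δ := by positivity
    set A : Set K := {x | δ ≤ |h x|} with hAdef
    have hAclosed : IsClosed A :=
      isClosed_le continuous_const (continuous_abs.comp h.continuous)
    have hAcompact : IsCompact A := hAclosed.isCompact
    have hAF : ∀ x ∈ A, x ∉ F := by
      intro x hx hxF
      rw [hAdef, Set.mem_setOf_eq, hhF x hxF, abs_zero] at hx
      linarith
    have hN : {n : ℕ | (Fs n ∩ A).Nonempty}.Finite :=
      aux_finite_meets Fs F hcluster A hAcompact hAF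
    have hsmall : ∀ n, n ∉ {n : ℕ | (Fs n ∩ A).Nonempty} → ∀ α,
        |γ n α (h.restrict (Fs n))| < ε := by
      intro n hn α
      have hres : ‖h.restrict (Fs n)‖ ≤ δ := by
        refine (ContinuousMap.norm_le _ hδ.le).2 fun x => ?_
        rw [ContinuousMap.restrict_apply, Real.norm_eq_abs]
        by_contra hge
        push_neg at hge
        exact hn ⟨(x : K), x.2, le_of_lt hge⟩
      calc |γ n α (h.restrict (Fs n))| ≤ ‖γ n α‖ * ‖h.restrict (Fs n)‖ :=
            (γ n α).le_opNorm _
        _ ≤ C * δ := by gcongr; exact (hC n α).2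
        _ < ε := by
            rw [hδdef, ← mul_div_assoc, div_lt_iff₀ (by linarith : (0:ℝ) < C + 1)]
            nlinarith
    apply Set.Finite.subset (Set.Finite.biUnion hN
      (fun n _ => ((hwstarnull n (h.restrict (Fs n)) ε hε).image (fun α => (n, α)))))
    rintro ⟨n, α⟩ hp
    simp only [Set.mem_setOf_eq, hγg] at hp
    have hnN : n ∈ {n : ℕ | (Fs n ∩ A).Nonempty} := by
      by_contra hnot
      exact absurd hp (not_le.2 (hsmall n hnot α))
    exact Set.mem_biUnion hnN ⟨α, hp, rfl⟩
  -- assemble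
  refine ⟨ι, hι, F', fh, γh, hF'closed, hsep, hbi, ⟨C * (1 + ‖E‖), ?_⟩, hwn, hfhsupp⟩
  intro n α
  have hE0 : (0 : ℝ) ≤ ‖E‖ := ContinuousLinearMap.opNorm_nonneg E
  refine ⟨?_, hγhnorm n α⟩
  calc ‖fh n α‖ ≤ C := hfhnorm n α
    _ ≤ C * (1 + ‖E‖) := by nlinarith
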